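/- Let h ≥ 1, let m_0, m_1, …, m_h be positive real numbers, and let ℓ_0 = 2 and ℓ_1, …, ℓ_h be positive integers such that ℓ_{h−j} divides ℓ_{h−j+1} for 1 ≤ j ≤ h. For 1 ≤ j ≤ h let C_j be the column vector of length ℓ_{h−j+1}/ℓ_{h−j} with all entries equal to 1/√(m_{h−j} m_{h−j+1}), and let B_j be the ℓ_{h−j+1} × ℓ_{h−j} block diagonal matrix with ℓ_{h−j} copies of C_j on its diagonal. Let α_1, …, α_{h+1} be real numbers, let Ω' be the 2×2 matrix with diagonal entries α_{h+1} and off-diagonal entries 1/m_0, and let P be the block tridiagonal matrix with diagonal blocks α_1 I_{ℓ_h}, α_2 I_{ℓ_{h−1}}, …, α_h I_{ℓ_1}, Ω', superdiagonal blocks B_1, …, B_h and subdiagonal blocks B_1^T, …, B_h^T. Define β_1 = α_1 and β_j = α_j − (ℓ_{h−j+2}/ℓ_{h−j+1}) · 1/(m_{h−j+1} m_{h−j+2} β_{j−1}) for 2 ≤ j ≤ h+1. If β_j ≠ 0 for all j = 1, …, h and β_{h+1} ≠ ±1/m_0, then det P = β_1^{ℓ_h} β_2^{ℓ_{h−1}}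 ⋯ β_h^{ℓ_1} (β_{h+1} + 1/m_0)(β_{h+1} − 1/m_0). -/

import Mathlib

open Matrix

/-- The index type of a block matrix with `h+1` diagonal blocks of sizes
`ℓ h, ℓ (h-1), …, ℓ 0` (from top to bottom). -/
abbrev BTidx (h : ℕ) (ℓ : ℕ → ℕ) : Type := (i : Fin (h + 1)) × Fin (ℓ (h - i.val))

/-- Entry `(a, b)` of the block `B_{i+1}` (of size `ℓ (h-i) × ℓ (h-i-1)`):
the block diagonal matrix with `ℓ (h-i-1)` copies of the column vector of length
`ℓ (h-i) / ℓ (h-i-1)` with all entries `1/√(m (h-i-1) * m (h-i))` on its diagonal. -/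
noncomputable def bEnt (h : ℕ) (ℓ : ℕ → ℕ) (m : ℕ → ℝ) (i a b : ℕ) : ℝ :=
  if a / (ℓ (h - i) / ℓ (h - i - 1)) = b then 1 / Real.sqrt (m (h - i - 1) * m (h - i)) else 0

/-- The block tridiagonal matrix `P` with diagonal blocks
`α 1 • I_{ℓ h}, α 2 • I_{ℓ (h-1)}, …, α h • I_{ℓ 1}, Ω'` (where `Ω'` is the `2 × 2`
matrix with diagonal entries `α (h+1)` and off-diagonal entries `1 / m 0`; here
`ℓ 0 = 2`), superdiagonal blocks `B_1, …, B_h` and subdiagonal blocks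
`B_1ᵀ, …, B_hᵀ`. -/
noncomputable def Pblk2 (h : ℕ) (ℓ : ℕ → ℕ) (m : ℕ → ℝ) (α : ℕ → ℝ) :
    Matrix (BTidx h ℓ) (BTidx h ℓ) ℝ :=
  fun p q =>
    if p.1.val = q.1.val then
      (if p.1.val = h then
        (if p.2.val = q.2.val then α (h + 1) else 1 / m 0)
      else if p.2.val = q.2.val then α (p.1.val + 1) else 0)
    else if p.1.val + 1 = q.1.val then bEnt h ℓ m p.1.val p.2.val q.2.val
    else if q.1.val + 1 = p.1.val then bEnt h ℓ m q.1.val q.2.val p.2.val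
    else 0

lemma BTidx_eq_iff {h : ℕ} {ℓ : ℕ → ℕ} {p q : BTidx h ℓ} (h1 : p.1 = q.1) :
    p = q ↔ p.2.val = q.2.val := by
  obtain ⟨i, x⟩ := p
  obtain ⟨j, y⟩ := q
  dsimp at h1
  subst h1
  simp [Fin.val_eq_val]

lemma card_div_fiber {n r k b : ℕ} (hn : n = r * k) (hr : 0 < r) (hb : b < k) :
    (Finset.univ.filter (fun a : Fin n => a.val / r = b)).card = r := by
  have hk : 0 < k := by omega
  have hn0 : 0 < n := by subst hn; exact Nat.mul_pos hr hk
  have key : (Finset.univ.filter (fun a : Fin n => a.val / r = b)).card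
      = (Finset.Ico (r * b) (r * b + r)).card := by
    apply Finset.card_nbij' (i := fun a => a.val) (j := fun x => ⟨x % n, Nat.mod_lt x hn0⟩)
    · intro a ha
      simp only [Finset.mem_coe, Finset.mem_filter, Finset.mem_univ, true_and] at ha
      simp only [Finset.mem_coe, Finset.mem_Ico]
      have hmod := Nat.div_add_mod a.val r
      have hmlt := Nat.mod_lt a.val hr
      rw [ha] at hmod
      omega
    · intro x hx
      simp only [Finset.mem_coe, Finset.mem_Ico] at hx
      have hxn : x < n := by
        have h4 : r * (b + 1) ≤ r * k := Nat.mul_le_mul_left r hb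
        have h5 : r * (b + 1) = r * b + r := by ring
        omega
      simp only [Finset.mem_coe, Finset.mem_filter, Finset.mem_univ, true_and]
      show (x % n) / r = b
      rw [Nat.mod_eq_of_lt hxn]
      have hmod := Nat.div_add_mod x r
      have hmlt := Nat.mod_lt x hr
      have h1 : b ≤ x / r := by
        by_contra hcon
        push_neg at hcon
        have : r * (x / r + 1) ≤ r * b := Nat.mul_le_mul_left r hcon
        have h5 : r * (x / r + 1) = r * (x / r) + r := by ring
        omega
      have h2 : x / r < b + 1 := by
        by_contra hcon
        push_neg at hcon
        have : r * (b + 1) ≤ r * (x / r) := Nat.mul_le_mul_left r hcon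
        have h5 : r * (b + 1) = r * b + r := by ring
        omega
      omega
    · intro a _
      apply Fin.ext
      simp [Nat.mod_eq_of_lt a.isLt]
    · intro x hx
      simp only [Finset.mem_coe, Finset.mem_Ico] at hx
      have hxn : x < n := by
        have h4 : r * (b + 1) ≤ r * k := Nat.mul_le_mul_left r hb
        have h5 : r * (b + 1) = r * b + r := by ring
        omega
      simp [Nat.mod_eq_of_lt hxn]
  rw [key, Nat.card_Ico]
  omega

lemma bent_sum (h : ℕ) (ℓ : ℕ → ℕ) (m : ℕ → ℝ) (i : ℕ)
    (hd : ℓ (h - i - 1) ∣ ℓ (h - i)) (hpos : 0 < ℓ (h - i - 1)) (hpos' : 0 < ℓ (h - i))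
    (hm1 : 0 < m (h - i - 1)) (hm2 : 0 < m (h - i))
    (b b' : ℕ) (hb : b < ℓ (h - i - 1)) :
    ∑ x : Fin (ℓ (h - i)), bEnt h ℓ m i x.val b * bEnt h ℓ m i x.val b'
      = if b = b' then ((ℓ (h - i) / ℓ (h - i - 1) : ℕ) : ℝ) *
          (1 / (m (h - i - 1) * m (h - i))) else 0 := by
  have hr : 0 < ℓ (h - i) / ℓ (h - i - 1) := Nat.div_pos (Nat.le_of_dvd hpos' hd) hpos
  have hn : ℓ (h - i) = (ℓ (h - i) / ℓ (h - i - 1)) * ℓ (h - i - 1) :=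
    (Nat.div_mul_cancel hd).symm
  by_cases hbb : b = b'
  · subst hbb
    rw [if_pos rfl]
    have hterm : ∀ x : Fin (ℓ (h - i)), bEnt h ℓ m i x.val b * bEnt h ℓ m i x.val b
        = if x.val / (ℓ (h - i) / ℓ (h - i - 1)) = b
            then 1 / (m (h - i - 1) * m (h - i)) else 0 := by
      intro x
      unfold bEnt
      split
      · rw [div_mul_div_comm, one_mul, Real.mul_self_sqrt (by positivity)]
      · ring
    simp only [hterm]
    rw [← Finset.sum_filter, Finset.sum_const, card_div_fiber hn hr hb, nsmul_eq_mul]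
  · rw [if_neg hbb]
    apply Finset.sum_eq_zero
    intro x _
    unfold bEnt
    by_cases h1 : x.val / (ℓ (h - i) / ℓ (h - i - 1)) = b
    · rw [if_pos h1, if_neg (by omega), mul_zero]
    · rw [if_neg h1, zero_mul]

noncomputable def Lmat (h : ℕ) (ℓ : ℕ → ℕ) (m : ℕ → ℝ) (β : ℕ → ℝ) :
    Matrix (BTidx h ℓ) (BTidx h ℓ) ℝ :=
  fun p q =>
    if p.1.val = q.1.val then (if p.2.val = q.2.val then 1 else 0)
    else if q.1.val + 1 = p.1.val then
      bEnt h ℓ m q.1.val q.2.val p.2.val / β (q.1.val + 1)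
    else 0

noncomputable def Mmat (h : ℕ) (ℓ : ℕ → ℕ) (m : ℕ → ℝ) (β : ℕ → ℝ) :
    Matrix (BTidx h ℓ) (BTidx h ℓ) ℝ :=
  fun p q =>
    if p.1.val = q.1.val then
      (if p.1.val = h then (if p.2.val = q.2.val then β (h + 1) else 1 / m 0)
       else if p.2.val = q.2.val then β (p.1.val + 1) else 0)
    else if p.1.val + 1 = q.1.val then bEnt h ℓ m p.1.val p.2.val q.2.val
    else 0

-- trial of the skeleton for the factorization

lemma Pfact (h : ℕ) (hh : 1 ≤ h) (m : ℕ → ℝ) (hm : ∀ i, i ≤ h → 0 < m i)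
    (ℓ : ℕ → ℕ) (hℓpos : ∀ i, i ≤ h → 0 < ℓ i)
    (hdvd : ∀ j, 1 ≤ j → j ≤ h → ℓ (h - j) ∣ ℓ (h - j + 1))
    (α β : ℕ → ℝ) (hβ1 : β 1 = α 1)
    (hβ : ∀ j, 2 ≤ j → j ≤ h + 1 →
      β j = α j - ((ℓ (h + 2 - j) : ℝ) / (ℓ (h + 1 - j) : ℝ)) *
        (1 / (m (h + 1 - j) * m (h + 2 - j) * β (j - 1))))
    (hne : ∀ j, 1 ≤ j → j ≤ h → β j ≠ 0) :
    Pblk2 h ℓ m α = Lmat h ℓ m β * Mmat h ℓ m β := by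
  ext ⟨pi, pa⟩ ⟨qi, qa⟩
  rw [Matrix.mul_apply, ← Finset.univ_sigma_univ, Finset.sum_sigma]
  have hdiag : (∑ x : Fin (ℓ (h - pi.val)),
      Lmat h ℓ m β ⟨pi, pa⟩ ⟨pi, x⟩ * Mmat h ℓ m β ⟨pi, x⟩ ⟨qi, qa⟩)
      = Mmat h ℓ m β ⟨pi, pa⟩ ⟨qi, qa⟩ := by
    rw [Finset.sum_eq_single_of_mem pa (Finset.mem_univ _) ?_]
    · simp only [Lmat]
      rw [if_pos trivial, if_pos trivial, one_mul]
    · intro x _ hxp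
      simp only [Lmat]
      rw [if_pos trivial, if_neg (fun e => hxp (Fin.ext (e.symm))), zero_mul]
  by_cases hp0 : pi.val = 0
  · rw [Finset.sum_eq_single_of_mem pi (Finset.mem_univ _) ?_]
    · rw [hdiag]
      simp only [Pblk2, Mmat]
      by_cases hq : pi.val = qi.val
      · rw [if_pos hq, if_pos hq, if_neg (by omega : ¬ pi.val = h),
          if_neg (by omega : ¬ pi.val = h)]
        by_cases hpq : pa.val = qa.val
        · rw [if_pos hpq, if_pos hpq, hp0]
          exact hβ1.symm
        · rw [if_neg hpq, if_neg hpq]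
      · rw [if_neg hq, if_neg hq]
        by_cases hq2 : pi.val + 1 = qi.val
        · rw [if_pos hq2, if_pos hq2]
        · rw [if_neg hq2, if_neg hq2, if_neg (by omega : ¬ qi.val + 1 = pi.val)]
    · intro i _ hne_i
      apply Finset.sum_eq_zero
      intro x _
      simp only [Lmat]
      rw [if_neg (fun e => hne_i (Fin.ext (e.symm))),
        if_neg (by omega : ¬ i.val + 1 = pi.val), zero_mul]
  · obtain ⟨k, hk⟩ : ∃ k, pi.val = k + 1 := ⟨pi.val - 1, by omega⟩
    have hkh : k + 1 ≤ h := by have := pi.isLt; omega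
    have hβk : β (k + 1) ≠ 0 := hne (k + 1) (by omega) (by omega)
    rw [Finset.sum_eq_add_of_mem ⟨k, by omega⟩ pi (Finset.mem_univ _) (Finset.mem_univ _)
        (by intro e; have := congrArg Fin.val e; simp at this; omega) ?_]
    swap
    · intro c _ hc
      obtain ⟨hc1, hc2⟩ := hc
      apply Finset.sum_eq_zero
      intro x _
      simp only [Lmat]
      rw [if_neg (fun e => hc2 (Fin.ext (e.symm))),
        if_neg (fun e => hc1 (Fin.ext (show c.val = k by omega))), zero_mul]
    rw [hdiag]
    have hL0 : ∀ x : Fin (ℓ (h - k)),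
        Lmat h ℓ m β ⟨pi, pa⟩ ⟨⟨k, by omega⟩, x⟩
          = bEnt h ℓ m k x.val pa.val / β (k + 1) := by
      intro x
      simp only [Lmat]
      rw [if_neg (by show ¬ pi.val = k; omega), if_pos (by show k + 1 = pi.val; omega)]
    simp only [hL0]
    by_cases hqk : qi.val = k
    · -- subdiagonal block
      have hM0 : ∀ x : Fin (ℓ (h - k)),
          Mmat h ℓ m β ⟨⟨k, by omega⟩, x⟩ ⟨qi, qa⟩
            = if x.val = qa.val then β (k + 1) else 0 := by
        intro x
        simp only [Mmat]
        rw [if_pos (by show k = qi.val; omega), if_neg (by show ¬ (k : ℕ) = h; omega)]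
      simp only [hM0]
      have hqa' : qa.val < ℓ (h - k) :=
        lt_of_lt_of_eq qa.isLt (congrArg ℓ (by omega))
      rw [Finset.sum_eq_single_of_mem (⟨qa.val, hqa'⟩ : Fin (ℓ (h - k)))
        (Finset.mem_univ _) ?_]
      · rw [if_pos rfl, div_mul_cancel₀ _ hβk]
        simp only [Pblk2, Mmat]
        rw [if_neg (by omega : ¬ pi.val = qi.val), if_neg (by omega : ¬ pi.val + 1 = qi.val),
          if_neg (by omega : ¬ pi.val = qi.val), if_pos (by omega : qi.val + 1 = pi.val),
          if_neg (by omega : ¬ pi.val + 1 = qi.val), add_zero]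
        exact congrFun (congrFun (congrArg (bEnt h ℓ m) hqk) qa.val) pa.val
      · intro x _ hxq
        rw [if_neg (fun e => hxq (Fin.ext e)), mul_zero]
    · by_cases hqk1 : qi.val = k + 1
      · -- diagonal block
        have hM1 : ∀ x : Fin (ℓ (h - k)),
            Mmat h ℓ m β ⟨⟨k, by omega⟩, x⟩ ⟨qi, qa⟩ = bEnt h ℓ m k x.val qa.val := by
          intro x
          simp only [Mmat]
          rw [if_neg (by show ¬ (k : ℕ) = qi.val; omega),
            if_pos (by show k + 1 = qi.val; omega)]
        simp only [hM1, div_mul_eq_mul_div, ← Finset.sum_div]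
        have he1 : h - k - 1 = h - (k + 1) := by omega
        have he2 : h - (k + 1) + 1 = h - k := by omega
        have hd : ℓ (h - k - 1) ∣ ℓ (h - k) := by
          have := hdvd (k + 1) (by omega) hkh
          rwa [he2, ← he1] at this
        have hb : pa.val < ℓ (h - k - 1) :=
          lt_of_lt_of_eq pa.isLt (congrArg ℓ (by omega))
        rw [bent_sum h ℓ m k hd (hℓpos _ (by omega)) (hℓpos _ (by omega))
          (hm _ (by omega)) (hm _ (by omega)) pa.val qa.val hb]
        have key : α (k + 2) = ((ℓ (h - k) / ℓ (h - k - 1) : ℕ) : ℝ) *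
            (1 / (m (h - k - 1) * m (h - k))) / β (k + 1) + β (k + 2) := by
          have hb2 := hβ (k + 2) (by omega) (by omega)
          have e3 : h + 2 - (k + 2) = h - k := by omega
          have e4 : h + 1 - (k + 2) = h - k - 1 := by omega
          rw [e3, e4, show k + 2 - 1 = k + 1 from by omega] at hb2
          have hcast : ((ℓ (h - k) / ℓ (h - k - 1) : ℕ) : ℝ)
              = (ℓ (h - k) : ℝ) / (ℓ (h - k - 1) : ℝ) :=
            Nat.cast_div hd (by exact_mod_cast (hℓpos _ (by omega : h - k - 1 ≤ h)).ne')
          have hm1 : m (h - k - 1) ≠ 0 := (hm _ (by omega)).ne'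
          have hm2 : m (h - k) ≠ 0 := (hm _ (by omega)).ne'
          have hl1 : (ℓ (h - k - 1) : ℝ) ≠ 0 := by
            exact_mod_cast (hℓpos _ (by omega : h - k - 1 ≤ h)).ne'
          rw [hcast, hb2]
          field_simp
          ring
        simp only [Pblk2, Mmat]
        rw [if_pos (by omega : pi.val = qi.val), if_pos (by omega : pi.val = qi.val)]
        by_cases hph : pi.val = h
        · rw [if_pos hph, if_pos hph]
          by_cases hpaqa : pa.val = qa.val
          · rw [if_pos hpaqa, if_pos hpaqa, if_pos hpaqa]
            have key' : α (h + 1) = ((ℓ (h - k) / ℓ (h - k - 1) : ℕ) : ℝ) *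
                (1 / (m (h - k - 1) * m (h - k))) / β (k + 1) + β (h + 1) := by
              have ehh : h + 1 = k + 2 := by omega
              rw [ehh]
              exact key
            exact key'
          · rw [if_neg hpaqa, if_neg hpaqa, if_neg hpaqa]
            simp
        · rw [if_neg hph, if_neg hph]
          by_cases hpaqa : pa.val = qa.val
          · rw [if_pos hpaqa, if_pos hpaqa, if_pos hpaqa]
            have key' : α (pi.val + 1) = ((ℓ (h - k) / ℓ (h - k - 1) : ℕ) : ℝ) *
                (1 / (m (h - k - 1) * m (h - k))) / β (k + 1) + β (pi.val + 1) := by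
              have ehh : pi.val + 1 = k + 2 := by omega
              rw [ehh]
              exact key
            exact key'
          · rw [if_neg hpaqa, if_neg hpaqa, if_neg hpaqa]
            simp
      · by_cases hqk2 : qi.val = k + 2
        · -- superdiagonal block
          have hM2 : ∀ x : Fin (ℓ (h - k)),
              Mmat h ℓ m β ⟨⟨k, by omega⟩, x⟩ ⟨qi, qa⟩ = 0 := by
            intro x
            simp only [Mmat]
            rw [if_neg (by show ¬ (k : ℕ) = qi.val; omega),
              if_neg (by show ¬ k + 1 = qi.val; omega)]
          simp only [hM2, mul_zero, Finset.sum_const_zero, zero_add]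
          simp only [Pblk2, Mmat]
          rw [if_neg (by omega : ¬ pi.val = qi.val), if_neg (by omega : ¬ pi.val = qi.val),
            if_pos (by omega : pi.val + 1 = qi.val), if_pos (by omega : pi.val + 1 = qi.val)]
        · -- far away
          have hM3 : ∀ x : Fin (ℓ (h - k)),
              Mmat h ℓ m β ⟨⟨k, by omega⟩, x⟩ ⟨qi, qa⟩ = 0 := by
            intro x
            simp only [Mmat]
            rw [if_neg (by show ¬ (k : ℕ) = qi.val; omega),
              if_neg (by show ¬ k + 1 = qi.val; omega)]
          simp only [hM3, mul_zero, Finset.sum_const_zero, zero_add]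
          simp only [Pblk2, Mmat]
          rw [if_neg (by omega : ¬ pi.val = qi.val), if_neg (by omega : ¬ pi.val = qi.val),
            if_neg (by omega : ¬ pi.val + 1 = qi.val),
            if_neg (by omega : ¬ pi.val + 1 = qi.val),
            if_neg (by omega : ¬ qi.val + 1 = pi.val)]

def blkEquiv (h : ℕ) (ℓ : ℕ → ℕ) (a : Fin (h + 1)) :
    Fin (ℓ (h - a.val)) ≃ {p : BTidx h ℓ // p.1 = a} where
  toFun := fun x => ⟨⟨a, x⟩, rfl⟩
  invFun := fun p => Fin.cast (congrArg (fun i : Fin (h + 1) => ℓ (h - i.val)) p.2) p.1.2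
  left_inv := fun x => rfl
  right_inv := fun p => Subtype.ext ((BTidx_eq_iff (by rw [p.2])).mpr (by simp))

lemma detL (h : ℕ) (ℓ : ℕ → ℕ) (m : ℕ → ℝ) (β : ℕ → ℝ) : (Lmat h ℓ m β).det = 1 := by
  rw [← Matrix.det_transpose]
  have hBT : ((Lmat h ℓ m β)ᵀ).BlockTriangular (fun p : BTidx h ℓ => p.1) := by
    intro p q hlt
    have hlt' : q.1.val < p.1.val := hlt
    simp only [Matrix.transpose_apply, Lmat]
    rw [if_neg (by omega), if_neg (by omega)]
  rw [hBT.det]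
  apply Finset.prod_eq_one
  intro a _
  have hone : ((Lmat h ℓ m β)ᵀ.toSquareBlock (fun p : BTidx h ℓ => p.1) a) = 1 := by
    ext pp qq
    obtain ⟨p, hp⟩ := pp
    obtain ⟨q, hq⟩ := qq
    show (Lmat h ℓ m β) q p = _
    rw [Matrix.one_apply]
    simp only [Lmat]
    rw [if_pos (show q.1.val = p.1.val by rw [hp, hq])]
    by_cases h2 : q.2.val = p.2.val
    · rw [if_pos h2, if_pos (Subtype.ext ((BTidx_eq_iff (hp.trans hq.symm)).mpr h2.symm))]
    · rw [if_neg h2,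
        if_neg (fun e => h2 (((BTidx_eq_iff (hp.trans hq.symm)).mp
          (congrArg Subtype.val e)).symm))]
  rw [hone, Matrix.det_one]

lemma detM (h : ℕ) (hh : 1 ≤ h) (m : ℕ → ℝ) (ℓ : ℕ → ℕ) (hℓ0 : ℓ 0 = 2)
    (hℓpos : ∀ i, i ≤ h → 0 < ℓ i) (β : ℕ → ℝ) :
    (Mmat h ℓ m β).det = (∏ j ∈ Finset.Icc 1 h, β j ^ ℓ (h + 1 - j)) *
      ((β (h + 1) + 1 / m 0) * (β (h + 1) - 1 / m 0)) := by
  have hBT : (Mmat h ℓ m β).BlockTriangular (fun p : BTidx h ℓ => p.1) := by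
    intro p q hlt
    have hlt' : q.1.val < p.1.val := hlt
    simp only [Mmat]
    rw [if_neg (by omega), if_neg (by omega)]
  rw [hBT.det]
  have himg : Finset.image (fun p : BTidx h ℓ => p.1) Finset.univ = Finset.univ := by
    apply Finset.eq_univ_iff_forall.mpr
    intro a
    exact Finset.mem_image.mpr ⟨⟨a, ⟨0, hℓpos _ (by omega)⟩⟩, Finset.mem_univ _, rfl⟩
  rw [himg]
  have hblock : ∀ a : Fin (h + 1),
      ((Mmat h ℓ m β).toSquareBlock (fun p : BTidx h ℓ => p.1) a).det
        = if a.val = h then (β (h + 1) + 1 / m 0) * (β (h + 1) - 1 / m 0)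
          else β (a.val + 1) ^ ℓ (h - a.val) := by
    intro a
    rw [← Matrix.det_submatrix_equiv_self (blkEquiv h ℓ a)]
    by_cases hah : a.val = h
    · rw [if_pos hah]
      have h2 : ℓ (h - a.val) = 2 := by rw [hah, Nat.sub_self, hℓ0]
      rw [← Matrix.det_submatrix_equiv_self (finCongr h2.symm), Matrix.det_fin_two]
      have hent : ∀ x y : Fin 2,
          ((((Mmat h ℓ m β).toSquareBlock (fun p : BTidx h ℓ => p.1) a).submatrix
            (blkEquiv h ℓ a) (blkEquiv h ℓ a)).submatrix
            (finCongr h2.symm) (finCongr h2.symm)) x y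
          = if (x : ℕ) = (y : ℕ) then β (h + 1) else 1 / m 0 := by
        intro x y
        show Mmat h ℓ m β ⟨a, Fin.cast h2.symm x⟩ ⟨a, Fin.cast h2.symm y⟩ = _
        simp only [Mmat]
        rw [if_pos trivial, if_pos hah]
        simp
      rw [hent 0 0, hent 1 1, hent 0 1, hent 1 0]
      norm_num
      ring
    · rw [if_neg hah]
      have hdiagM : (((Mmat h ℓ m β).toSquareBlock (fun p : BTidx h ℓ => p.1) a).submatrix
          (blkEquiv h ℓ a) (blkEquiv h ℓ a))
          = Matrix.diagonal (fun _ : Fin (ℓ (h - a.val)) => β (a.val + 1)) := by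
        ext x y
        show Mmat h ℓ m β ⟨a, x⟩ ⟨a, y⟩ = _
        simp only [Mmat]
        rw [if_pos trivial, if_neg hah]
        by_cases hxy : x.val = y.val
        · obtain rfl : x = y := Fin.ext hxy
          rw [if_pos rfl, Matrix.diagonal_apply_eq]
        · rw [if_neg hxy, Matrix.diagonal_apply_ne _ (fun e => hxy (congrArg Fin.val e))]
      rw [hdiagM, Matrix.det_diagonal, Finset.prod_const, Finset.card_univ, Fintype.card_fin]
  rw [Finset.prod_congr rfl (fun a _ => hblock a), Fin.prod_univ_castSucc]
  simp only [Fin.coe_castSucc, Fin.val_last]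
  rw [if_pos trivial]
  rw [Finset.prod_congr rfl (fun i : Fin h => fun _ => if_neg (Nat.ne_of_lt i.isLt))]
  have hprod : (∏ i : Fin h, β (i.val + 1) ^ ℓ (h - i.val))
      = ∏ j ∈ Finset.Icc 1 h, β j ^ ℓ (h + 1 - j) := by
    rw [Fin.prod_univ_eq_prod_range (fun n => β (n + 1) ^ ℓ (h - n)) h]
    rw [show Finset.Icc 1 h = Finset.Ico 1 (h + 1) from (Finset.Ico_add_one_right_eq_Icc 1 h)]
    rw [Finset.prod_Ico_eq_prod_range]
    apply Finset.prod_congr (by norm_num)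
    intro i _
    have e1 : 1 + i = i + 1 := by omega
    rw [e1, show h + 1 - (i + 1) = h - i from by omega]
  rw [hprod]

theorem stmt6 (h : ℕ) (hh : 1 ≤ h) (m : ℕ → ℝ) (hm : ∀ i, i ≤ h → 0 < m i)
    (ℓ : ℕ → ℕ) (hℓ0 : ℓ 0 = 2) (hℓpos : ∀ i, i ≤ h → 0 < ℓ i)
    (hdvd : ∀ j, 1 ≤ j → j ≤ h → ℓ (h - j) ∣ ℓ (h - j + 1))
    (α : ℕ → ℝ) (β : ℕ → ℝ)
    (hβ1 : β 1 = α 1)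
    (hβ : ∀ j, 2 ≤ j → j ≤ h + 1 →
      β j = α j - ((ℓ (h + 2 - j) : ℝ) / (ℓ (h + 1 - j) : ℝ)) *
        (1 / (m (h + 1 - j) * m (h + 2 - j) * β (j - 1))))
    (hne : ∀ j, 1 ≤ j → j ≤ h → β j ≠ 0)
    (hne' : β (h + 1) ≠ 1 / m 0) (hne'' : β (h + 1) ≠ -(1 / m 0)) :
    (Pblk2 h ℓ m α).det =
      (∏ j ∈ Finset.Icc 1 h, β j ^ ℓ (h + 1 - j)) *
        ((β (h + 1) + 1 / m 0) * (β (h + 1) - 1 / m 0)) := by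
  rw [Pfact h hh m hm ℓ hℓpos hdvd α β hβ1 hβ hne, Matrix.det_mul,
    detL h ℓ m β, one_mul, detM h hh m ℓ hℓ0 hℓpos β]
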